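/- Let μ = 2/r with r > 2 and dr/dr* = 1 - μ. The function G(r*) = ℓ(ℓ+1)(2-3μ)/(2r³) + (3-4μ)/r⁴ with ℓ ≥ 1 has exactly one zero r* = -γ_ℓ, and -4/3 ≤ r*(r = 8/3) ≤ -γ_ℓ ≤ r*(r = 3) = 0, where r* is normalized so that r*(3) = 0. -/
import Mathlib


/-- The coefficient `G = ℓ(ℓ+1)(2-3μ)/(2r³) + (3-4μ)/r⁴` (with `μ = 2/r`,
`ℓ ≥ 1`, Schwarzschild `M = 1`, `r*` normalized so that `r*(3) = 0`) has
exactly one zero `-γ_ℓ`, and `-4/3 ≤ r*(8/3) ≤ -γ_ℓ ≤ r*(3) = 0`. -/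
theorem coefficient_zero_location (r : ℝ → ℝ) (ℓ : ℕ) (hℓ : 1 ≤ ℓ)
    (hrange : Set.range r = Set.Ioi (2 : ℝ))
    (hmono : StrictMono r)
    (hdr : ∀ s, HasDerivAt r (1 - 2 / r s) s)
    (hnorm : r 0 = 3) :
    ∃ s₀ : ℝ,
      (∀ s, (ℓ * (ℓ + 1) * (2 - 3 * (2 / r s)) / (2 * (r s) ^ 3)
          + (3 - 4 * (2 / r s)) / (r s) ^ 4 = 0) ↔ s = s₀) ∧
      -4 / 3 ≤ s₀ ∧ s₀ ≤ 0 ∧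
      ∀ s₈, r s₈ = 8 / 3 → -4 / 3 ≤ s₈ ∧ s₈ ≤ s₀ := by
  have hr2 : ∀ s, 2 < r s := by
    intro s
    have : r s ∈ Set.range r := Set.mem_range_self s
    rw [hrange] at this
    exact this
  set L : ℝ := (ℓ : ℝ) * (ℓ + 1) with hLdef
  have hL1 : (1:ℝ) ≤ (ℓ:ℝ) := by exact_mod_cast hℓ
  have hL2 : (2:ℝ) ≤ L := by nlinarith
  set f : ℝ → ℝ := fun x => L * x * (x - 3) + 3 * x - 8 with hfdef
  have hfmono : ∀ x y : ℝ, 2 < x → x < y → f x < f y := by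
    intro x y hx hxy
    have h1 : f y - f x = (y - x) * (L * (x + y - 3) + 3) := by
      simp only [hfdef]; ring
    have h2 : 0 < L * (x + y - 3) + 3 := by nlinarith
    nlinarith [mul_pos (sub_pos.mpr hxy) h2]
  have hcontf : Continuous f := by
    simp only [hfdef]; continuity
  have hfa : f (8/3) ≤ 0 := by simp only [hfdef]; nlinarith
  have hfb : (0:ℝ) ≤ f 3 := by simp only [hfdef]; nlinarith
  obtain ⟨x₀, hx₀mem, hfx₀⟩ :=
    intermediate_value_Icc (by norm_num : (8:ℝ)/3 ≤ 3) hcontf.continuousOn ⟨hfa, hfb⟩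
  have hx₀gt : 2 < x₀ := lt_of_lt_of_le (by norm_num) hx₀mem.1
  obtain ⟨s₀, hs₀⟩ : x₀ ∈ Set.range r := by rw [hrange]; exact hx₀gt
  -- uniqueness of the zero of f among x > 2
  have hunique : ∀ x : ℝ, 2 < x → (f x = 0 ↔ x = x₀) := by
    intro x hx
    constructor
    · intro hfx
      rcases lt_trichotomy x x₀ with h | h | h
      · have := hfmono x x₀ hx h; rw [hfx, hfx₀] at this; linarith
      · exact h
      · have := hfmono x₀ x hx₀gt h; rw [hfx, hfx₀] at this; linarith
    · intro h; rw [h]; exact hfx₀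
  -- rewrite G in terms of f
  have hkey : ∀ s, ((ℓ:ℝ) * (ℓ + 1) * (2 - 3 * (2 / r s)) / (2 * (r s) ^ 3)
      + (3 - 4 * (2 / r s)) / (r s) ^ 4 = 0) ↔ f (r s) = 0 := by
    intro s
    have hrpos : (0:ℝ) < r s := lt_trans (by norm_num) (hr2 s)
    have hne : r s ≠ 0 := ne_of_gt hrpos
    have heq : (ℓ:ℝ) * (ℓ + 1) * (2 - 3 * (2 / r s)) / (2 * (r s) ^ 3)
        + (3 - 4 * (2 / r s)) / (r s) ^ 4 = f (r s) / (r s) ^ 5 := by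
      simp only [hfdef, hLdef]
      field_simp
      ring
    rw [heq, div_eq_zero_iff]
    constructor
    · rintro (h | h)
      · exact h
      · exact absurd h (pow_ne_zero 5 hne)
    · intro h; exact Or.inl h
  -- the mean-value lower bound for any s with r s = 8/3
  have hlower : ∀ s₈, r s₈ = 8/3 → -4/3 ≤ s₈ := by
    intro s₈ h8
    have hs₈0 : s₈ ≤ 0 := by
      have : r s₈ ≤ r 0 := by rw [h8, hnorm]; norm_num
      exact hmono.le_iff_le.mp this
    set g : ℝ → ℝ := fun s => r s - s / 4 with hgdef
    have hg' : ∀ s, HasDerivAt g (1 - 2 / r s - 1/4) s := by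
      intro s
      exact (hdr s).sub ((hasDerivAt_id s).div_const 4)
    have hmonog : MonotoneOn g (Set.Icc s₈ 0) := by
      apply monotoneOn_of_deriv_nonneg (convex_Icc s₈ 0)
      · exact fun x _ => (hg' x).differentiableAt.continuousAt.continuousWithinAt
      · exact fun x _ => ((hg' x).differentiableAt).differentiableWithinAt
      · intro x hx
        rw [interior_Icc] at hx
        rw [(hg' x).deriv]
        have hrx : (8:ℝ)/3 ≤ r x := by
          rw [← h8]; exact hmono.le_iff_le.mpr (le_of_lt hx.1)
        have hrxpos : (0:ℝ) < r x := lt_trans (by norm_num) (hr2 x)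
        have : 2 / r x ≤ 3/4 := by
          rw [div_le_iff₀ hrxpos]; linarith
        linarith
    have := hmonog (Set.left_mem_Icc.mpr hs₈0) (Set.right_mem_Icc.mpr hs₈0) hs₈0
    simp only [hgdef] at this
    rw [h8, hnorm] at this
    linarith
  refine ⟨s₀, ?_, ?_, ?_, ?_⟩
  · intro s
    rw [hkey s, hunique (r s) (hr2 s), ← hs₀]
    exact ⟨fun h => hmono.injective h, fun h => by rw [h]⟩
  · obtain ⟨s₈, hs₈⟩ : (8:ℝ)/3 ∈ Set.range r := by rw [hrange]; norm_num
    have h1 := hlower s₈ hs₈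
    have h2 : s₈ ≤ s₀ := by
      apply hmono.le_iff_le.mp
      rw [hs₈, hs₀]; exact hx₀mem.1
    linarith
  · apply hmono.le_iff_le.mp
    rw [hs₀, hnorm]; exact hx₀mem.2
  · intro s₈ hs₈
    refine ⟨by have := hlower s₈ hs₈; linarith, ?_⟩
    apply hmono.le_iff_le.mp
    rw [hs₈, hs₀]; exact hx₀mem.1
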